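/- arXiv:1809.08868 — 2 statements merged into one kernel-verified Lean document; each statement's English description precedes it below -/
import Mathlib

section
/- If f : ℕ+ → ℝ is such that its Bougaïef derivative Df = f * μ is of constant sign (say Df ≥ 0), then f has a Cesàro mean value: (1/x) Σ_{n ≤ x} f(n) → Σ_{m ≥ 1} Df(m)/m as x → ∞ (possibly +∞). -/
open ArithmeticFunction ArithmeticFunction.zeta Finset Filter in
theorem key17 (g : ArithmeticFunction ℝ) (N : ℕ) :
    ∑ n ∈ Finset.Icc 1 N, (g * ζ) n = ∑ m ∈ Finset.Icc 1 N, g m * ((N / m : ℕ) : ℝ) := by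
  have h1 : ∀ n ∈ Finset.Icc 1 N, (g * ζ) n
      = ∑ d ∈ Finset.Icc 1 N, if d ∣ n then g d else 0 := by
    intro n hn
    rw [Finset.mem_Icc] at hn
    rw [ArithmeticFunction.coe_mul_zeta_apply, ← Finset.sum_filter]
    congr 1
    ext d
    simp only [Nat.mem_divisors, Finset.mem_filter, Finset.mem_Icc]
    constructor
    · rintro ⟨hd, hn0⟩
      have hd1 : 1 ≤ d := Nat.pos_of_dvd_of_pos hd (Nat.pos_of_ne_zero hn0)
      exact ⟨⟨hd1, le_trans (Nat.le_of_dvd (Nat.pos_of_ne_zero hn0) hd) hn.2⟩, hd⟩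
    · rintro ⟨_, hd⟩
      exact ⟨hd, by omega⟩
  rw [Finset.sum_congr rfl h1, Finset.sum_comm]
  refine Finset.sum_congr rfl fun m hm => ?_
  rw [← Finset.sum_filter, Finset.sum_const]
  have h2 : Finset.Icc 1 N = Finset.Ioc 0 N := by rw [← Finset.Icc_add_one_left_eq_Ioc, zero_add]
  rw [h2, Nat.Ioc_filter_dvd_card_eq_div, nsmul_eq_mul, mul_comm]

open ArithmeticFunction ArithmeticFunction.zeta in
/-- If the Bougaïef derivative `Df = f * μ` is nonnegative, then `f` has a Cesàro mean value
`∑_{m ≥ 1} Df(m)/m`, possibly `+∞`. -/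
theorem stmt17 (f : ArithmeticFunction ℝ)
    (h : ∀ n : ℕ, 0 ≤ (f * (ArithmeticFunction.moebius : ArithmeticFunction ℤ)) n) :
    Filter.Tendsto
      (fun x : ℝ => (((∑ n ∈ Finset.Icc 1 ⌊x⌋₊, f n) / x : ℝ) : EReal))
      Filter.atTop
      (nhds (∑' m : ℕ,
        (((f * (ArithmeticFunction.moebius : ArithmeticFunction ℤ)) m / m : ℝ) : EReal))) := by
  classical
  open Finset Filter in
  set G : ArithmeticFunction ℝ := f * (ArithmeticFunction.moebius : ArithmeticFunction ℤ)
    with hGdef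
  have hf : ∀ N : ℕ, ∑ n ∈ Finset.Icc 1 N, f n
      = ∑ m ∈ Finset.Icc 1 N, G m * ((N / m : ℕ) : ℝ) := by
    intro N
    have hGz : G * ζ = f := by
      rw [hGdef, mul_assoc, ArithmeticFunction.coe_moebius_mul_coe_zeta, mul_one]
    conv_lhs => rw [← hGz]
    exact key17 G N
  set a : ℕ → ℝ := fun m => G m / m with ha
  have ha0 : a 0 = 0 := by simp [ha]
  have hann : ∀ m, 0 ≤ a m := fun m => div_nonneg (h m) (Nat.cast_nonneg m)
  set S : ℕ → ℝ := fun N => ∑ m ∈ Finset.Icc 1 N, a m with hS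
  have hSnn : ∀ N, 0 ≤ S N := fun N => Finset.sum_nonneg fun m _ => hann m
  set T : ENNReal := ∑' m, ENNReal.ofReal (a m) with hT
  -- the EReal tsum equals the ENNReal one
  have hsum : (∑' m : ℕ, ((G m / m : ℝ) : EReal)) = (T : EReal) := by
    have h1 : HasSum (fun m => ENNReal.ofReal (a m)) T := ENNReal.summable.hasSum
    have φcont : Continuous (ENNReal.toEReal) := continuous_coe_ennreal_ereal
    have h2 := h1.map (⟨⟨ENNReal.toEReal, EReal.coe_ennreal_zero⟩,
      EReal.coe_ennreal_add⟩ : ENNReal →+ EReal) φcont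
    have h3 : HasSum (fun m : ℕ => ((G m / m : ℝ) : EReal)) (T : EReal) := by
      convert h2 using 2 with m
      simp only [Function.comp, AddMonoidHom.coe_mk, ZeroHom.coe_mk]
      rw [EReal.coe_ennreal_ofReal, max_eq_left (hann m)]
      rfl
    exact h3.tsum_eq
  rw [hsum]
  -- partial sums are below T
  have hST : ∀ N, (S N : EReal) ≤ (T : EReal) := by
    intro N
    have h1 : ENNReal.ofReal (S N) ≤ T := by
      rw [hS]
      rw [ENNReal.ofReal_sum_of_nonneg (fun m _ => hann m)]
      exact ENNReal.sum_le_tsum _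
    calc (S N : EReal) = (ENNReal.ofReal (S N) : EReal) := by
          rw [EReal.coe_ennreal_ofReal, max_eq_left (hSnn N)]
      _ ≤ (T : EReal) := EReal.coe_ennreal_le_coe_ennreal_iff.2 h1
  -- approximation from below of T by partial sums
  have hins : ∀ i : ℕ, Finset.range (i + 1) = insert 0 (Finset.Icc 1 i) := by
    intro i; ext m
    simp only [Finset.mem_range, Finset.mem_insert, Finset.mem_Icc]
    omega
  have hrange : ∀ i : ℕ, ∑ m ∈ Finset.range i, ENNReal.ofReal (a m)
      ≤ ENNReal.ofReal (S i) := by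
    intro i
    calc ∑ m ∈ Finset.range i, ENNReal.ofReal (a m)
        ≤ ∑ m ∈ Finset.range (i + 1), ENNReal.ofReal (a m) :=
          Finset.sum_le_sum_of_subset (Finset.range_subset_range.2 (Nat.le_succ i))
      _ = ENNReal.ofReal (S i) := by
          rw [hins i, Finset.sum_insert (by simp), ha0, ENNReal.ofReal_zero, zero_add,
            hS, ENNReal.ofReal_sum_of_nonneg (fun m _ => hann m)]
  have hTS : ∀ r : ℝ, (r : EReal) < (T : EReal) → ∃ N, r < S N := by
    intro r hr
    rcases lt_or_ge r 0 with h0 | h0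
    · exact ⟨0, by simpa [hS] using h0⟩
    · have hr' : ENNReal.ofReal r < T := by
        have : ((ENNReal.ofReal r : ENNReal) : EReal) < (T : EReal) := by
          rwa [EReal.coe_ennreal_ofReal, max_eq_left h0]
        exact EReal.coe_ennreal_lt_coe_ennreal_iff.1 this
      rw [hT, ENNReal.tsum_eq_iSup_nat, lt_iSup_iff] at hr'
      obtain ⟨i, hi⟩ := hr'
      refine ⟨i, ?_⟩
      have := lt_of_lt_of_le hi (hrange i)
      exact (ENNReal.ofReal_lt_ofReal_iff_of_nonneg h0).1 this
  -- upper bound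
  have hub : ∀ x : ℝ, 1 ≤ x → (∑ n ∈ Finset.Icc 1 ⌊x⌋₊, f n) / x ≤ S ⌊x⌋₊ := by
    intro x hx
    have hx0 : (0 : ℝ) < x := lt_of_lt_of_le one_pos hx
    rw [hf, Finset.sum_div, hS]
    apply Finset.sum_le_sum
    intro m hm
    have hm1 : 1 ≤ m := (Finset.mem_Icc.1 hm).1
    have hmR : (0 : ℝ) < m := by exact_mod_cast hm1
    have hfl : ((⌊x⌋₊ / m : ℕ) : ℝ) ≤ x / m := by
      rw [← Nat.floor_div_natCast]
      exact Nat.floor_le (by positivity)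
    have step : G m * ((⌊x⌋₊ / m : ℕ) : ℝ) / x ≤ G m * (x / m) / x := by
      gcongr
      exact h m
    refine le_trans step (le_of_eq ?_)
    show G m * (x / m) / x = a m
    rw [ha]
    field_simp
  -- lower bound
  have hlb : ∀ (M : ℕ) (x : ℝ), 1 ≤ x → (M : ℝ) ≤ x →
      S M - (∑ m ∈ Finset.Icc 1 M, G m) / x ≤ (∑ n ∈ Finset.Icc 1 ⌊x⌋₊, f n) / x := by
    intro M x hx hMx
    have hx0 : (0 : ℝ) < x := lt_of_lt_of_le one_pos hx
    have hMN : M ≤ ⌊x⌋₊ := Nat.le_floor hMx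
    rw [hf]
    have step1 : ∑ m ∈ Finset.Icc 1 M, G m * ((⌊x⌋₊ / m : ℕ) : ℝ)
        ≤ ∑ m ∈ Finset.Icc 1 ⌊x⌋₊, G m * ((⌊x⌋₊ / m : ℕ) : ℝ) :=
      Finset.sum_le_sum_of_subset_of_nonneg
        (Finset.Icc_subset_Icc_right hMN)
        (fun m _ _ => mul_nonneg (h m) (Nat.cast_nonneg _))
    have step2 : ∑ m ∈ Finset.Icc 1 M, G m * (x / m - 1)
        ≤ ∑ m ∈ Finset.Icc 1 M, G m * ((⌊x⌋₊ / m : ℕ) : ℝ) := by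
      apply Finset.sum_le_sum
      intro m hm
      have hm1 : 1 ≤ m := (Finset.mem_Icc.1 hm).1
      have hmR : (0 : ℝ) < m := by exact_mod_cast hm1
      have hfl : x / m - 1 ≤ ((⌊x⌋₊ / m : ℕ) : ℝ) := by
        rw [← Nat.floor_div_natCast]
        have := Nat.sub_one_lt_floor (x / m)
        linarith
      exact mul_le_mul_of_nonneg_left hfl (h m)
    have key : S M - (∑ m ∈ Finset.Icc 1 M, G m) / x
        = (∑ m ∈ Finset.Icc 1 M, G m * (x / m - 1)) / x := by
      rw [hS, Finset.sum_div, Finset.sum_div, ← Finset.sum_sub_distrib]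
      apply Finset.sum_congr rfl
      intro m hm
      have hm1 : 1 ≤ m := (Finset.mem_Icc.1 hm).1
      have hmR : (0 : ℝ) < m := by exact_mod_cast hm1
      show a m - G m / x = G m * (x / m - 1) / x
      rw [ha]
      field_simp
    rw [key]
    have hnum := step2.trans step1
    gcongr
  -- conclude via order topology
  refine tendsto_order.2 ⟨?_, ?_⟩
  · intro c hc
    obtain ⟨r, hcr, hrT⟩ := EReal.exists_between_coe_real hc
    obtain ⟨N, hN⟩ := hTS r hrT
    have hC : Filter.Tendsto (fun x : ℝ => S N - (∑ m ∈ Finset.Icc 1 N, G m) / x)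
        Filter.atTop (nhds (S N)) := by
      have h0 : Filter.Tendsto (fun x : ℝ => (∑ m ∈ Finset.Icc 1 N, G m) / x)
          Filter.atTop (nhds 0) :=
        Filter.Tendsto.div_atTop tendsto_const_nhds Filter.tendsto_id
      simpa using tendsto_const_nhds.sub h0
    have hev1 : ∀ᶠ x : ℝ in Filter.atTop,
        r < S N - (∑ m ∈ Finset.Icc 1 N, G m) / x :=
      hC.eventually (eventually_gt_nhds hN)
    filter_upwards [hev1, Filter.eventually_ge_atTop (1 : ℝ),
      Filter.eventually_ge_atTop (N : ℝ)] with x h1 h2 h3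
    have hle := hlb N x h2 h3
    have : r < (∑ n ∈ Finset.Icc 1 ⌊x⌋₊, f n) / x := lt_of_lt_of_le h1 hle
    exact lt_trans hcr (EReal.coe_lt_coe_iff.2 this)
  · intro b hb
    filter_upwards [Filter.eventually_ge_atTop (1 : ℝ)] with x hx
    have h1 : (∑ n ∈ Finset.Icc 1 ⌊x⌋₊, f n) / x ≤ S ⌊x⌋₊ := hub x hx
    calc (((∑ n ∈ Finset.Icc 1 ⌊x⌋₊, f n) / x : ℝ) : EReal)
        ≤ (S ⌊x⌋₊ : EReal) := EReal.coe_le_coe_iff.2 h1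
      _ ≤ (T : EReal) := hST _
      _ < b := hb
end

section
/- Let c_0 : ℤ → ℂ with c_0(-i) = conj(c_0(i)), and suppose Δ_n = det(c_0(i-j))_{1 ≤ i,j ≤ n} > 0 for all n (with Δ_0 = 1). Then the sequence Δ_n/Δ_{n-1} is decreasing in n. -/
open Matrix

noncomputable def feketeEquiv (n : ℕ) : Fin 2 ⊕ Fin n ≃ Fin (n + 2) :=
  Equiv.ofBijective
    (Sum.elim (fun i => if i = 0 then 0 else Fin.last (n + 1))
      (fun i : Fin n => i.succ.castSucc))
    (by
      rw [Fintype.bijective_iff_injective_and_card]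
      refine ⟨?_, by simp [Nat.add_comm]⟩
      rintro (i | i) (j | j) hab <;>
        simp only [Sum.elim_inl, Sum.elim_inr] at hab
      · fin_cases i <;> fin_cases j <;> simp_all [Fin.ext_iff]
      · exfalso
        have := congrArg Fin.val hab
        have hj := j.isLt
        split_ifs at this <;> simp [Fin.val_succ] at this <;> omega
      · exfalso
        have := congrArg Fin.val hab
        have hi := i.isLt
        split_ifs at this <;> simp [Fin.val_succ] at this <;> omega
      · have := congrArg Fin.val hab
        simp [Fin.val_succ] at this
        exact congrArg Sum.inr (Fin.ext this))

lemma feketeEquiv_inl (n : ℕ) (i : Fin 2) :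
    feketeEquiv n (Sum.inl i) = if i = 0 then 0 else Fin.last (n + 1) := rfl

lemma feketeEquiv_inr (n : ℕ) (i : Fin n) :
    feketeEquiv n (Sum.inr i) = i.succ.castSucc := rfl

lemma fekete_key (c₀ : ℤ → ℂ) (hc : ∀ i : ℤ, c₀ (-i) = starRingEnd ℂ (c₀ i))
    (Δ : ℕ → ℝ)
    (hΔ : ∀ m : ℕ, (Δ m : ℂ) =
      Matrix.det (Matrix.of fun i j : Fin m => c₀ ((i : ℤ) - (j : ℤ))))
    (n : ℕ) (h2 : Δ (n + 2) ≠ 0) :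
    Δ (n + 2) * Δ n ≤ Δ (n + 1) * Δ (n + 1) := by
  set M : Matrix (Fin (n + 2)) (Fin (n + 2)) ℂ :=
    Matrix.of fun i j : Fin (n + 2) => c₀ ((i : ℤ) - (j : ℤ)) with hMdef
  set A := M.adjugate with hAdef
  set l : Fin (n + 2) := Fin.last (n + 1) with hldef
  have hl0 : l ≠ 0 := by simp [hldef, Fin.ext_iff]
  have hm0 : ∀ j : Fin n, (j.succ.castSucc : Fin (n + 2)) ≠ 0 := fun j => by
    simp [Fin.ext_iff]
  have hml : ∀ j : Fin n, (j.succ.castSucc : Fin (n + 2)) ≠ l := fun j => by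
    have := j.isLt; simp [hldef, Fin.ext_iff]; omega
  have hsucc : ∀ i : Fin (n + 1), ((i.succ : Fin (n + 2)) : ℤ) = (i : ℤ) + 1 := fun i => by
    simp [Fin.val_succ]
  have hsc : ∀ i : Fin n, ((i.succ.castSucc : Fin (n + 2)) : ℤ) = (i : ℤ) + 1 := fun i => by
    simp [Fin.val_succ]
  set N : Matrix (Fin (n + 2)) (Fin (n + 2)) ℂ :=
    Matrix.of fun i j => if j = 0 then A i 0 else if j = l then A i l
      else if i = j then 1 else 0 with hNdef
  set e := feketeEquiv n with hedef
  -- columns of M * N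
  have hcol0 : ∀ i, (M * N) i 0 = if i = 0 then M.det else 0 := by
    intro i
    have h1 : (M * N) i 0 = (M * A) i 0 := by simp [Matrix.mul_apply, hNdef]
    rw [h1, hAdef, Matrix.mul_adjugate]
    simp [Matrix.one_apply, mul_ite]
  have hcoll : ∀ i, (M * N) i l = if i = l then M.det else 0 := by
    intro i
    have h1 : (M * N) i l = (M * A) i l := by simp [Matrix.mul_apply, hNdef, hl0]
    rw [h1, hAdef, Matrix.mul_adjugate]
    simp [Matrix.one_apply, mul_ite]
  have hcolm : ∀ (i) (j : Fin n), (M * N) i j.succ.castSucc = M i j.succ.castSucc := by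
    intro i j
    simp [Matrix.mul_apply, hNdef, hm0 j, hml j, mul_ite, -Fin.castSucc_succ]
  -- block form of (M * N).submatrix e e
  have hMN : (M * N).submatrix ⇑e ⇑e =
      Matrix.fromBlocks !![M.det, 0; 0, M.det]
        (Matrix.of fun (i : Fin 2) (j : Fin n) => (M * N) (e (Sum.inl i)) (e (Sum.inr j)))
        0 (Matrix.of fun i j : Fin n => c₀ ((i : ℤ) - (j : ℤ))) := by
    ext a b
    rcases a with i | i <;> rcases b with j | j
    · fin_cases i <;> fin_cases j <;>
        simp [hedef, feketeEquiv_inl, hcol0, hcoll, hl0, Ne.symm hl0, ← hldef]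
    · simp [hedef]
    · fin_cases j <;>
        simp [hedef, feketeEquiv_inl, feketeEquiv_inr, hcol0, hcoll, hm0 i, hml i, ← hldef,
          -Fin.castSucc_succ]
    · simp only [Matrix.submatrix_apply, hedef, feketeEquiv_inr, hcolm,
        Matrix.fromBlocks_apply₂₂, Matrix.of_apply]
      rw [hMdef]
      simp only [Matrix.of_apply, hsc]
      congr 1; ring
  have hdetMN : (M * N).det = M.det * M.det * (Δ n : ℂ) := by
    rw [← Matrix.det_submatrix_equiv_self e (M * N), hMN, Matrix.det_fromBlocks_zero₂₁,
      Matrix.det_fin_two_of, hΔ n]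
    ring
  -- block form of N.submatrix e e
  have hN : N.submatrix ⇑e ⇑e =
      Matrix.fromBlocks !![A 0 0, A 0 l; A l 0, A l l] 0
        (Matrix.of fun (i : Fin n) (j : Fin 2) => N (e (Sum.inr i)) (e (Sum.inl j))) 1 := by
    ext a b
    rcases a with i | i <;> rcases b with j | j
    · fin_cases i <;> fin_cases j <;>
        simp [hedef, feketeEquiv_inl, hNdef, hl0, Ne.symm hl0, ← hldef]
    · fin_cases i <;>
        simp [hedef, feketeEquiv_inl, feketeEquiv_inr, hNdef, hm0 j, hml j,
          Ne.symm (hm0 j), Ne.symm (hml j), ← hldef, -Fin.castSucc_succ]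
    · simp [hedef]
    · simp [hedef, feketeEquiv_inr, hNdef, hm0 j, hml j, Matrix.one_apply,
        Fin.castSucc_inj, Fin.succ_inj, -Fin.castSucc_succ]
  have hdetN : N.det = A 0 0 * A l l - A 0 l * A l 0 := by
    rw [← Matrix.det_submatrix_equiv_self e N, hN, Matrix.det_fromBlocks_zero₁₂,
      Matrix.det_one, mul_one, Matrix.det_fin_two_of]
  -- Desnanot–Jacobi
  have hdM : (Δ (n + 2) : ℂ) = M.det := hΔ (n + 2)
  have hMne : M.det ≠ 0 := by
    rw [← hdM]; exact Complex.ofReal_ne_zero.mpr h2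
  have hkey : A 0 0 * A l l - A 0 l * A l 0 = (Δ (n + 2) : ℂ) * (Δ n : ℂ) := by
    apply mul_left_cancel₀ hMne
    rw [← hdetN, ← Matrix.det_mul, hdetMN, ← hdM]; ring
  -- identify the adjugate entries
  have hA00 : A 0 0 = (Δ (n + 1) : ℂ) := by
    rw [hAdef, Matrix.adjugate_fin_succ_eq_det_submatrix, hΔ (n + 1)]
    simp only [Fin.val_zero, Nat.add_zero, pow_zero, one_mul, Fin.succAbove_zero]
    congr 1
    ext i j
    simp only [Matrix.submatrix_apply, hMdef, Matrix.of_apply, hsucc]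
    congr 1; ring
  have hAll : A l l = (Δ (n + 1) : ℂ) := by
    rw [hAdef, Matrix.adjugate_fin_succ_eq_det_submatrix, hΔ (n + 1)]
    rw [hldef, Fin.succAbove_last]
    rw [Even.neg_one_pow ⟨(Fin.last (n + 1)).val, rfl⟩, one_mul]
    congr 1
  set q : ℂ := (M.submatrix Fin.succ Fin.castSucc).det with hqdef
  have hPQ : M.submatrix Fin.castSucc Fin.succ = (M.submatrix Fin.succ Fin.castSucc)ᴴ := by
    ext i j
    simp only [Matrix.submatrix_apply, Matrix.conjTranspose_apply, hMdef, Matrix.of_apply,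
      hsucc, Fin.coe_castSucc]
    rw [show ((i : ℤ) - ((j : ℤ) + 1)) = -(((j : ℤ) + 1) - (i : ℤ)) by ring, hc,
      starRingEnd_apply]
  have hAprod : A 0 l * A l 0 = (Complex.normSq q : ℂ) := by
    rw [hAdef, Matrix.adjugate_fin_succ_eq_det_submatrix, Matrix.adjugate_fin_succ_eq_det_submatrix]
    rw [hldef, Fin.succAbove_last, Fin.succAbove_zero]
    have hsign : ((-1 : ℂ) ^ (((Fin.last (n + 1)).val + (0 : Fin (n+2)).val)) *
        (-1 : ℂ) ^ (((0 : Fin (n+2)).val + (Fin.last (n + 1)).val))) = 1 := by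
      simp only [Fin.val_zero, Fin.val_last, Nat.add_zero, Nat.zero_add, ← pow_add]
      exact Even.neg_one_pow ⟨n + 1, rfl⟩
    calc ((-1:ℂ) ^ (((Fin.last (n+1)).val + (0:Fin (n+2)).val)) *
          (M.submatrix Fin.castSucc Fin.succ).det) *
        ((-1:ℂ) ^ (((0:Fin (n+2)).val + (Fin.last (n+1)).val)) *
          (M.submatrix Fin.succ Fin.castSucc).det)
        = ((-1:ℂ) ^ (((Fin.last (n+1)).val + (0:Fin (n+2)).val)) *
            (-1:ℂ) ^ (((0:Fin (n+2)).val + (Fin.last (n+1)).val))) *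
          ((M.submatrix Fin.castSucc Fin.succ).det *
            (M.submatrix Fin.succ Fin.castSucc).det) := by ring
      _ = (M.submatrix Fin.castSucc Fin.succ).det * q := by rw [hsign, one_mul, hqdef]
      _ = star q * q := by rw [hPQ, Matrix.det_conjTranspose, hqdef]
      _ = (Complex.normSq q : ℂ) := by
          rw [← starRingEnd_apply, ← Complex.normSq_eq_conj_mul_self]
  -- conclude
  have hreal : Δ (n + 1) * Δ (n + 1) - Complex.normSq q = Δ (n + 2) * Δ n := by
    rw [hA00, hAll, hAprod] at hkey
    have : ((Δ (n + 1) * Δ (n + 1) - Complex.normSq q : ℝ) : ℂ) =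
        ((Δ (n + 2) * Δ n : ℝ) : ℂ) := by
      push_cast
      linear_combination hkey
    exact_mod_cast this
  have := Complex.normSq_nonneg q
  linarith

/-- Fekete's theorem: for positive hermitian Toeplitz determinants `Δ n`, the sequence
`Δ (n+1) / Δ n` is decreasing. -/
theorem stmt19 (c₀ : ℤ → ℂ) (hc : ∀ i : ℤ, c₀ (-i) = starRingEnd ℂ (c₀ i))
    (Δ : ℕ → ℝ) (hΔ0 : Δ 0 = 1)
    (hΔ : ∀ n : ℕ, (Δ n : ℂ) =
      Matrix.det (Matrix.of fun i j : Fin n => c₀ ((i : ℤ) - (j : ℤ))))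
    (hpos : ∀ n : ℕ, 0 < Δ n) :
    Antitone (fun n : ℕ => Δ (n + 1) / Δ n) := by
  apply antitone_nat_of_succ_le
  intro n
  show Δ (n + 1 + 1) / Δ (n + 1) ≤ Δ (n + 1) / Δ n
  rw [div_le_div_iff₀ (hpos (n + 1)) (hpos n)]
  exact fekete_key c₀ hc Δ hΔ n (ne_of_gt (hpos (n + 2)))
end
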